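/- Define d_n(a, y) := Σ_{x=1}^{n} binom(x−1, y−a) · binom(n−x, n−y) · (a−1)! · (n−a)!. Then d_n(1, y) = (n−1)! for all 1 ≤ y ≤ n, and d_n satisfies d_n(a+1, y) = ((y−a)/(n−a)) d_n(a, y) + ((n−y+1)/(n−a)) d_n(a, y−1); consequently d_n(a, x) = n!/(n−a+1) if x ≥ a and d_n(a, x) = 0 if x < a. -/

import Mathlib

open Finset

/-- Binomial coefficient with an integer lower index, zero when negative. -/
def chooseZ (m : ℕ) (k : ℤ) : ℕ := if 0 ≤ k then m.choose k.toNat else 0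

/-- The drop function for a single-row diagram. -/
def D (n a y : ℕ) : ℕ :=
  ∑ x ∈ Finset.Icc 1 n,
    chooseZ (x - 1) ((y : ℤ) - a) * Nat.choose (n - x) (n - y) * Nat.factorial (a - 1) * Nat.factorial (n - a)

lemma key : ∀ (n p q : ℕ),
    (∑ i ∈ range (n+1), Nat.choose i p * Nat.choose (n-i) q) = (n+1).choose (p+q+1) := by
  intro n
  induction n with
  | zero => intro p q; cases p <;> cases q <;> simp [Nat.choose]
  | succ n ih =>
    intro p q
    cases q with
    | zero =>
      have h : ∀ i ∈ range (n+2), Nat.choose i p * Nat.choose (n+1-i) 0 = Nat.choose i p := by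
        intro i _; simp
      rw [Finset.sum_congr rfl h, Finset.sum_range_succ]
      have h2 : ∀ i ∈ range (n+1), Nat.choose i p * Nat.choose (n-i) 0 = Nat.choose i p := by
        intro i _; simp
      rw [← Finset.sum_congr rfl h2, ih p 0]
      rw [Nat.choose_succ_succ (n+1) p]
      simp only [Nat.succ_eq_add_one, Nat.add_zero]
      omega
    | succ q =>
      rw [Finset.sum_range_succ]
      have h : ∀ i ∈ range (n+1), Nat.choose i p * Nat.choose (n+1-i) (q+1) =
          Nat.choose i p * Nat.choose (n-i) q + Nat.choose i p * Nat.choose (n-i) (q+1) := by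
        intro i hi
        have hi' : i ≤ n := by simpa [Nat.lt_succ_iff] using hi
        have : n + 1 - i = (n - i) + 1 := by omega
        rw [this, Nat.choose_succ_succ, mul_add]
      rw [Finset.sum_congr rfl h, Finset.sum_add_distrib, ih p q, ih p (q+1)]
      have : (n + 1 - (n+1)) = 0 := by omega
      rw [this]
      have hz : Nat.choose 0 (q+1) = 0 := rfl
      rw [hz, mul_zero, add_zero]
      have h3 : p + (q+1) + 1 = (p + q + 1) + 1 := by omega
      rw [h3, Nat.choose_succ_succ (n+1) (p+q+1)]

lemma Dzero (n a y : ℕ) (h : y < a) : D n a y = 0 := by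
  apply Finset.sum_eq_zero
  intro x _
  have : ¬ (0 : ℤ) ≤ (y : ℤ) - a := by omega
  simp [chooseZ, this]
  intro h'; omega

lemma Dval (n a y : ℕ) (ha : 1 ≤ a) (hay : a ≤ y) (hy : y ≤ n) :
    D n a y * (n - a + 1) = Nat.factorial n := by
  have hn : 1 ≤ n := le_trans (le_trans ha hay) hy
  have hsum : (∑ x ∈ Finset.Icc 1 n, chooseZ (x - 1) ((y : ℤ) - a) * Nat.choose (n - x) (n - y))
      = Nat.choose n (n - a + 1) := by
    rw [← Finset.Ico_add_one_right_eq_Icc, Finset.sum_Ico_eq_sum_range]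
    have h : ∀ i ∈ range (n + 1 - 1), chooseZ (1 + i - 1) ((y : ℤ) - a) * Nat.choose (n - (1+i)) (n - y)
        = Nat.choose i (y - a) * Nat.choose ((n-1) - i) (n - y) := by
      intro i hi
      have h1 : (1 + i - 1) = i := by omega
      have h2 : n - (1 + i) = (n - 1) - i := by omega
      have h3 : (0 : ℤ) ≤ (y : ℤ) - a := by omega
      have h4 : ((y : ℤ) - a).toNat = y - a := by omega
      rw [h1, h2]
      simp [chooseZ, h3, h4]
      intro h'; omega
    rw [Finset.sum_congr rfl h]
    have hn1 : n + 1 - 1 = (n - 1) + 1 := by omega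
    rw [hn1, key (n-1) (y-a) (n-y)]
    have : (n - 1) + 1 = n := by omega
    rw [this]
    congr 1
    omega
  have hD : D n a y = Nat.choose n (n - a + 1) * Nat.factorial (a-1) * Nat.factorial (n-a) := by
    unfold D
    rw [← Finset.sum_mul, ← Finset.sum_mul, hsum]
  rw [hD]
  have hk : n - a + 1 ≤ n := by omega
  have := Nat.choose_mul_factorial_mul_factorial hk
  have hnk : n - (n - a + 1) = a - 1 := by omega
  rw [hnk] at this
  calc Nat.choose n (n - a + 1) * Nat.factorial (a-1) * Nat.factorial (n-a) * (n - a + 1)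
      = Nat.choose n (n - a + 1) * (Nat.factorial (n-a) * (n - a + 1)) * Nat.factorial (a-1) := by ring
    _ = Nat.choose n (n - a + 1) * Nat.factorial (n-a+1) * Nat.factorial (a-1) := by
        rw [Nat.factorial_succ (n-a)]; ring_nf
    _ = Nat.factorial n := this

lemma DvalDiv (n a y : ℕ) (ha : 1 ≤ a) (hay : a ≤ y) (hy : y ≤ n) :
    D n a y = Nat.factorial n / (n - a + 1) := by
  symm
  exact Nat.div_eq_of_eq_mul_left (by omega) (Dval n a y ha hay hy).symm

theorem single_row_drop_function (n : ℕ) (hn : 1 ≤ n) :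
    (∀ y ∈ Finset.Icc 1 n, D n 1 y = Nat.factorial (n - 1)) ∧
    (∀ a y, 1 ≤ a → a < n → y ∈ Finset.Icc 1 n →
      (D n (a + 1) y : ℚ) =
        (((y : ℚ) - a) / ((n : ℚ) - a)) * D n a y +
          (((n : ℚ) - y + 1) / ((n : ℚ) - a)) * D n a (y - 1)) ∧
    (∀ a x, 1 ≤ a → a ≤ n → x ∈ Finset.Icc 1 n →
      D n a x = if a ≤ x then Nat.factorial n / (n - a + 1) else 0) := by
  refine ⟨?_, ?_, ?_⟩
  · intro y hy
    simp only [Finset.mem_Icc] at hy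
    rw [DvalDiv n 1 y le_rfl hy.1 hy.2]
    have h1 : n - 1 + 1 = n := by omega
    rw [h1]
    have := Nat.factorial_succ (n - 1)
    rw [h1] at this
    rw [this, Nat.mul_div_cancel_left _ (by omega : 0 < n)]
  · intro a y ha han hy
    simp only [Finset.mem_Icc] at hy
    have hna : ((n : ℚ) - a) ≠ 0 := by
      have : (a : ℚ) < n := by exact_mod_cast han
      linarith
    rcases lt_or_ge y (a+1) with hlt | hge
    · rcases Nat.lt_or_ge y a with hlt2 | hge2
      · -- y < a : all zero
        rw [Dzero n (a+1) y (by omega), Dzero n a y hlt2, Dzero n a (y-1) (by omega)]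
        simp
      · -- y = a
        have hya : y = a := by omega
        subst hya
        rw [Dzero n (y+1) y (by omega), Dzero n y (y-1) (by omega)]
        simp
    · -- a + 1 ≤ y
      have e1 := Dval n (a+1) y (by omega) hge hy.2
      have e2 := Dval n a y ha (by omega) hy.2
      have e3 := Dval n a (y-1) ha (by omega) (by omega)
      have c1 : (D n (a+1) y : ℚ) * ((n : ℚ) - a) = Nat.factorial n := by
        have h : ((n - (a+1) + 1 : ℕ) : ℚ) = (n : ℚ) - a := by
          have : (n - (a+1) + 1 : ℕ) = n - a := by omega
          rw [this]; push_cast [Nat.cast_sub (le_of_lt han)]; ring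
        rw [← h]; exact_mod_cast congrArg (Nat.cast : ℕ → ℚ) e1
      have hcast : ((n - a + 1 : ℕ) : ℚ) = (n : ℚ) - a + 1 := by
        push_cast [Nat.cast_sub (le_of_lt han)]; ring
      have c2 : (D n a y : ℚ) * ((n : ℚ) - a + 1) = Nat.factorial n := by
        rw [← hcast]; exact_mod_cast congrArg (Nat.cast : ℕ → ℚ) e2
      have c3 : (D n a (y-1) : ℚ) * ((n : ℚ) - a + 1) = Nat.factorial n := by
        rw [← hcast]; exact_mod_cast congrArg (Nat.cast : ℕ → ℚ) e3
      have hy1 : ((y - 1 : ℕ) : ℚ) = (y : ℚ) - 1 := by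
        push_cast [Nat.cast_sub hy.1]; ring
      have hna1 : ((n : ℚ) - a + 1) ≠ 0 := by
        have : (a : ℚ) < n := by exact_mod_cast han
        nlinarith
      -- solve
      have hD1 : (D n (a+1) y : ℚ) = (Nat.factorial n : ℚ) / ((n : ℚ) - a) := by
        field_simp at c1 ⊢; linarith [c1]
      have hD2 : (D n a y : ℚ) = (Nat.factorial n : ℚ) / ((n : ℚ) - a + 1) := by
        field_simp at c2 ⊢; linarith [c2]
      have hD3 : (D n a (y-1) : ℚ) = (Nat.factorial n : ℚ) / ((n : ℚ) - a + 1) := by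
        field_simp at c3 ⊢; linarith [c3]
      rw [hD1, hD2, hD3]
      field_simp
      ring
  · intro a x ha han hx
    simp only [Finset.mem_Icc] at hx
    by_cases h : a ≤ x
    · rw [if_pos h]; exact DvalDiv n a x ha h hx.2
    · rw [if_neg h]; exact Dzero n a x (by omega)
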